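/- Let l : ℝ → ℝ be a loss function (nondecreasing, convex, l(0)=0, l(x) ≥ x for all x) with lim_{x→∞} l(x)/x = ∞. Then the expected weighted loss EW^l(X) := E[l(-X)] is strongly sensitive to large losses on the Orlicz heart H^{Φ_l}: for every X ∈ H^{Φ_l} with ℙ[X < 0] > 0 there exists λ ≥ 1 such that E[l(-λX)] > 0. -/

import Mathlib

open Filter MeasureTheory

/-- for a loss function `l` with `lim_{x→∞} l(x)/x = ∞`, the expected
weighted loss `EW^l(X) = E[l(-X)]` is strongly sensitive to large losses on the Orlicz
heart `H^{Φ_l}`: every `X ∈ H^{Φ_l}` with `ℙ[X<0] > 0` satisfies `E[l(-λX)] > 0` for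
some `λ ≥ 1`. -/
theorem stmt12 {Ω : Type*} [MeasurableSpace Ω] (μ : Measure Ω) [IsProbabilityMeasure μ]
    (l : ℝ → ℝ) (hmono : Monotone l) (hconv : ConvexOn ℝ Set.univ l)
    (h0 : l 0 = 0) (hge : ∀ x : ℝ, x ≤ l x)
    (hsuper : Tendsto (fun x : ℝ => l x / x) atTop atTop)
    (X : Ω → ℝ) (hmeas : Measurable X)
    (hheart : ∀ a : ℝ, 0 < a → Integrable (fun ω => l (a * |X ω|)) μ)
    (hneg : 0 < μ {ω | X ω < 0}) :
    ∃ lam : ℝ, 1 ≤ lam ∧ 0 < ∫ ω, l (-(lam * X ω)) ∂μ := by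
  have hlmeas : Measurable l := hmono.measurable
  have hlnonneg : ∀ x : ℝ, 0 ≤ x → 0 ≤ l x := fun x hx => le_trans hx (hge x)
  -- |X| is integrable
  have hintX : Integrable (fun ω => |X ω|) μ := by
    refine (hheart 1 one_pos).mono hmeas.abs.aestronglyMeasurable (ae_of_all _ fun ω => ?_)
    rw [Real.norm_eq_abs, Real.norm_eq_abs, abs_of_nonneg (abs_nonneg _),
      abs_of_nonneg (hlnonneg _ (by positivity))]
    simpa using hge (|X ω|)
  -- find k > 0 with μ {X ≤ -k} > 0
  obtain ⟨n, hn⟩ : ∃ n : ℕ, 0 < μ {ω | X ω ≤ -(1 / (n + 1))} := by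
    by_contra h
    push_neg at h
    have h0' : ∀ n : ℕ, μ {ω | X ω ≤ -(1 / ((n : ℝ) + 1))} = 0 :=
      fun n => le_antisymm (h n) (zero_le)
    have hsub : {ω | X ω < 0} ⊆ ⋃ n : ℕ, {ω | X ω ≤ -(1 / ((n : ℝ) + 1))} := by
      intro ω hω
      have hpos : 0 < -X ω := by simpa using hω
      obtain ⟨m, hm⟩ := exists_nat_gt (1 / (-X ω))
      refine Set.mem_iUnion.2 ⟨m, ?_⟩
      have h1 : 1 / ((m : ℝ) + 1) ≤ -X ω := by
        rw [one_div_le (by positivity) hpos]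
        linarith
      simp only [Set.mem_setOf_eq]
      linarith
    exact absurd (measure_mono_null hsub (measure_iUnion_null h0')) hneg.ne'
  set k : ℝ := 1 / ((n : ℝ) + 1) with hk_def
  have hk : 0 < k := by positivity
  set A : Set Ω := {ω | X ω ≤ -k} with hA_def
  have measA : MeasurableSet A := hmeas measurableSet_Iic
  set p : ℝ := (μ A).toReal with hp_def
  have hp : 0 < p := ENNReal.toReal_pos hn.ne' (measure_ne_top μ _)
  set C : ℝ := ∫ ω, |X ω| ∂μ with hC_def
  have hC : 0 ≤ C := integral_nonneg fun ω => abs_nonneg _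
  -- choose lam
  set M : ℝ := (C + 1) / (p * k) with hM_def
  obtain ⟨x0, hx0⟩ := Filter.eventually_atTop.mp (hsuper.eventually_ge_atTop M)
  set lam : ℝ := max 1 (x0 / k) with hlam_def
  have hlam1 : (1 : ℝ) ≤ lam := le_max_left _ _
  have hlampos : 0 < lam := lt_of_lt_of_le one_pos hlam1
  have hlamk : x0 ≤ lam * k := (div_le_iff₀ hk).mp (le_max_right _ _)
  have hlamkpos : 0 < lam * k := by positivity
  have hlk : M * (lam * k) ≤ l (lam * k) := (le_div_iff₀ hlamkpos).mp (hx0 _ hlamk)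
  have hMeq : M * (lam * k) = (C + 1) * lam / p := by
    rw [hM_def]; field_simp
  have Hl : (C + 1) * lam ≤ p * l (lam * k) := by
    have h1 : (C + 1) * lam / p ≤ l (lam * k) := hMeq ▸ hlk
    calc (C + 1) * lam = p * ((C + 1) * lam / p) := by field_simp
      _ ≤ p * l (lam * k) := by
          exact mul_le_mul_of_nonneg_left h1 hp.le
  -- integrability of the target
  have hintf : Integrable (fun ω => l (-(lam * X ω))) μ := by
    refine ((hintX.const_mul lam).add (hheart lam hlampos)).mono'
      ((hlmeas.comp ((hmeas.const_mul lam).neg)).aestronglyMeasurable)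
      (ae_of_all _ fun ω => ?_)
    have h1 : l (-(lam * X ω)) ≤ l (lam * |X ω|) := by
      refine hmono ?_
      have := mul_le_mul_of_nonneg_left (neg_le_abs (X ω)) hlampos.le
      linarith [this, (mul_neg lam (X ω)).symm]
    have h2 : -(lam * |X ω|) ≤ l (-(lam * X ω)) := by
      refine le_trans ?_ (hge _)
      have := mul_le_mul_of_nonneg_left (le_abs_self (X ω)) hlampos.le
      linarith
    have h3 : 0 ≤ l (lam * |X ω|) := hlnonneg _ (by positivity)
    have h4 : 0 ≤ lam * |X ω| := by positivity
    rw [Real.norm_eq_abs, abs_le]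
    constructor <;> simp only [Pi.add_apply] <;> linarith
  -- lower bound function
  set g : Ω → ℝ := fun ω => A.indicator (fun _ => l (lam * k)) ω - lam * |X ω| with hg_def
  have hintg : Integrable g μ :=
    ((integrable_const _).indicator measA).sub (hintX.const_mul lam)
  have hle : ∀ ω, g ω ≤ l (-(lam * X ω)) := by
    intro ω
    have h2 : -(lam * |X ω|) ≤ l (-(lam * X ω)) := by
      refine le_trans ?_ (hge _)
      have := mul_le_mul_of_nonneg_left (le_abs_self (X ω)) hlampos.le
      linarith
    by_cases hω : ω ∈ A
    · have hXω : X ω ≤ -k := hω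
      have h5 : lam * k ≤ -(lam * X ω) := by nlinarith
      have h6 : l (lam * k) ≤ l (-(lam * X ω)) := hmono h5
      simp only [hg_def, Set.indicator_of_mem hω]
      have : 0 ≤ lam * |X ω| := by positivity
      linarith
    · simp only [hg_def, Set.indicator_of_notMem hω]
      linarith
  have hint_le : ∫ ω, g ω ∂μ ≤ ∫ ω, l (-(lam * X ω)) ∂μ :=
    integral_mono hintg hintf hle
  have hgval : ∫ ω, g ω ∂μ = p * l (lam * k) - lam * C := by
    rw [hg_def]
    rw [integral_sub ((integrable_const _).indicator measA) (hintX.const_mul lam),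
      integral_indicator_const _ measA, integral_const_mul, smul_eq_mul]
    rfl
  refine ⟨lam, hlam1, ?_⟩
  have : 0 < p * l (lam * k) - lam * C := by nlinarith
  linarith [hgval ▸ hint_le]
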